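/- For fixed u ∈ (0,1), the function ψ(λ₁,...,λₙ) = ∑_{i=1}^n λᵢ/(1-(1-λᵢ)u) is increasing in each λᵢ and Schur-concave on (0,∞)ⁿ. Consequently, if (λ₁,...,λₙ) weakly supermajorizes (μ₁,...,μₙ), then ∑_{i=1}^n λᵢ/(1-(1-λᵢ)u) ≤ ∑_{i=1}^n μᵢ/(1-(1-μᵢ)u). -/

import Mathlib

open Finset

/-- `x` majorizes `y`. -/
def Majorizes {n : ℕ} (x y : Fin n → ℝ) : Prop :=
  (∀ j : Fin n, ∑ i ∈ Finset.Iic j, (x ∘ Tuple.sort x) i ≤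
      ∑ i ∈ Finset.Iic j, (y ∘ Tuple.sort y) i) ∧
    ∑ i, x i = ∑ i, y i

/-- `x` weakly supermajorizes `y`. -/
def WSupermaj {n : ℕ} (x y : Fin n → ℝ) : Prop :=
  ∀ j : Fin n, ∑ i ∈ Finset.Iic j, (x ∘ Tuple.sort x) i ≤
    ∑ i ∈ Finset.Iic j, (y ∘ Tuple.sort y) i

section aux

variable {u : ℝ}

/-- Denominator. -/
noncomputable def Dpo (u t : ℝ) : ℝ := 1 - (1 - t) * u

/-- The summand function. -/
noncomputable def fpo (u t : ℝ) : ℝ := t / Dpo u t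

lemma Dpo_pos (hu : u ∈ Set.Ioo (0:ℝ) 1) {t : ℝ} (ht : 0 < t) : 0 < Dpo u t := by
  obtain ⟨h0, h1⟩ := hu
  have : Dpo u t = (1 - u) + t * u := by unfold Dpo; ring
  rw [this]
  nlinarith

lemma Dpo_mono (hu : u ∈ Set.Ioo (0:ℝ) 1) {s t : ℝ} (hst : s ≤ t) : Dpo u s ≤ Dpo u t := by
  obtain ⟨h0, _⟩ := hu
  unfold Dpo
  nlinarith

lemma slope_id (hu : u ∈ Set.Ioo (0:ℝ) 1) {s t : ℝ} (hs : 0 < s) (ht : 0 < t) :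
    fpo u t - fpo u s = (t - s) * ((1 - u) / (Dpo u s * Dpo u t)) := by
  have h1 := Dpo_pos hu hs
  have h2 := Dpo_pos hu ht
  unfold fpo Dpo at *
  rw [div_sub_div _ _ h2.ne' h1.ne', mul_div_assoc', div_eq_div_iff (mul_pos h2 h1).ne' (mul_pos h1 h2).ne']
  ring

lemma fpo_mono (hu : u ∈ Set.Ioo (0:ℝ) 1) {s t : ℝ} (hs : 0 < s) (hst : s ≤ t) :
    fpo u s ≤ fpo u t := by
  have ht : 0 < t := lt_of_lt_of_le hs hst
  have hid := slope_id hu hs ht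
  have hc : 0 ≤ (1 - u) / (Dpo u s * Dpo u t) :=
    div_nonneg (by linarith [hu.2]) (le_of_lt (mul_pos (Dpo_pos hu hs) (Dpo_pos hu ht)))
  nlinarith [mul_nonneg (sub_nonneg.2 hst) hc]

/-- Abel-summation nonnegativity. -/
lemma abel_nonneg : ∀ (n : ℕ) (g d : ℕ → ℝ), Antitone g → (∀ i, 0 ≤ g i) →
    (∀ j, 0 ≤ ∑ i ∈ range (j + 1), d i) → 0 ≤ ∑ i ∈ range n, g i * d i := by
  intro n
  induction n with
  | zero => intro g d _ _ _; simp
  | succ n ih =>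
    intro g d hant hnn hT
    set G : ℕ → ℝ := fun i => g (min i n) - g n with hG
    have hGant : Antitone G := fun i j hij =>
      sub_le_sub_right (hant (min_le_min hij le_rfl)) _
    have hGnn : ∀ i, 0 ≤ G i := fun i => sub_nonneg.2 (hant (min_le_right i n))
    have h1 : 0 ≤ ∑ i ∈ range n, G i * d i := ih G d hGant hGnn hT
    have hpt : ∀ i ∈ range (n + 1), g i * d i = G i * d i + g n * d i := by
      intro i hi
      have hmin : min i n = i := min_eq_left (Nat.lt_succ_iff.1 (mem_range.1 hi))
      simp only [hG, hmin]
      ring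
    have hsplit : ∑ i ∈ range (n + 1), g i * d i
        = (∑ i ∈ range (n + 1), G i * d i) + g n * ∑ i ∈ range (n + 1), d i := by
      rw [Finset.sum_congr rfl hpt, Finset.sum_add_distrib, Finset.mul_sum]
    have hGn : G n = 0 := by simp [hG]
    have h2 : ∑ i ∈ range (n + 1), G i * d i = ∑ i ∈ range n, G i * d i := by
      rw [Finset.sum_range_succ, hGn]; ring
    have h3 : 0 ≤ g n * ∑ i ∈ range (n + 1), d i :=
      mul_nonneg (hnn n) (hT n)
    rw [hsplit, h2]
    linarith

/-- key HLP-type lemma over ℕ. -/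
lemma key_nat (hu : u ∈ Set.Ioo (0:ℝ) 1) (n : ℕ) (A B : ℕ → ℝ)
    (hA : ∀ i, 0 < A i) (hB : ∀ i, 0 < B i) (hAm : Monotone A) (hBm : Monotone B)
    (hT : ∀ j, j < n → ∑ i ∈ range (j + 1), A i ≤ ∑ i ∈ range (j + 1), B i) :
    ∑ i ∈ range n, fpo u (A i) ≤ ∑ i ∈ range n, fpo u (B i) := by
  set g : ℕ → ℝ := fun i => (1 - u) / (Dpo u (A i) * Dpo u (B i)) with hg
  set d : ℕ → ℝ := fun i => if i < n then B i - A i else 0 with hd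
  have hgnn : ∀ i, 0 ≤ g i := fun i =>
    div_nonneg (by linarith [hu.2]) (le_of_lt (mul_pos (Dpo_pos hu (hA i)) (Dpo_pos hu (hB i))))
  have hgant : Antitone g := by
    intro i j hij
    have h1 : Dpo u (A i) * Dpo u (B i) ≤ Dpo u (A j) * Dpo u (B j) :=
      mul_le_mul (Dpo_mono hu (hAm hij)) (Dpo_mono hu (hBm hij))
        (Dpo_pos hu (hB i)).le (Dpo_pos hu (hA j)).le
    have hpos : 0 < Dpo u (A i) * Dpo u (B i) := mul_pos (Dpo_pos hu (hA i)) (Dpo_pos hu (hB i))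
    simp only [hg]
    gcongr
    linarith [hu.2]
  have hTd : ∀ j, 0 ≤ ∑ i ∈ range (j + 1), d i := by
    intro j
    rcases lt_or_ge j n with hj | hj
    · have : ∀ i ∈ range (j + 1), d i = B i - A i := by
        intro i hi
        have : i < n := lt_of_lt_of_le (mem_range.1 hi) (Nat.succ_le_of_lt hj)
        simp [hd, this]
      rw [Finset.sum_congr rfl this, Finset.sum_sub_distrib]
      linarith [hT j hj]
    · rcases Nat.eq_zero_or_pos n with rfl | hn
      · have : ∀ i ∈ range (j + 1), d i = 0 := by intro i _; simp [hd]
        rw [Finset.sum_congr rfl this]; simp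
      · have hsub : range n ⊆ range (j + 1) := by
          apply Finset.range_subset_range.2; omega
        have hzero : ∀ i ∈ range (j + 1), i ∉ range n → d i = 0 := by
          intro i _ hi
          have : ¬ i < n := fun h => hi (mem_range.2 h)
          simp [hd, this]
        rw [← Finset.sum_subset hsub hzero]
        have heq : ∀ i ∈ range n, d i = B i - A i := by
          intro i hi; simp [hd, mem_range.1 hi]
        rw [Finset.sum_congr rfl heq, Finset.sum_sub_distrib]
        have := hT (n - 1) (by omega)
        have hn1 : n - 1 + 1 = n := by omega
        rw [hn1] at this
        linarith
  have habel := abel_nonneg n g d hgant hgnn hTd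
  have hpt : ∀ i ∈ range n, g i * d i = fpo u (B i) - fpo u (A i) := by
    intro i hi
    have hin : i < n := mem_range.1 hi
    have := slope_id hu (hA i) (hB i)
    simp only [hd, hg, if_pos hin]
    linarith [slope_id hu (hA i) (hB i)]
  rw [Finset.sum_congr rfl hpt, Finset.sum_sub_distrib] at habel
  linarith

/-- Sum over `Iic j` in `Fin n` equals a range sum. -/
lemma sum_Iic_fin {n : ℕ} (h : Fin n → ℝ) (j : Fin n) (H : ℕ → ℝ)
    (hH : ∀ i (hi : i < n), H i = h ⟨i, hi⟩) :
    ∑ i ∈ Iic j, h i = ∑ i ∈ range (j.1 + 1), H i := by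
  refine Finset.sum_bij' (fun (i : Fin n) _ => i.1) (fun i hi => (⟨i, by
      have := mem_range.1 hi; omega⟩ : Fin n)) ?_ ?_ ?_ ?_ ?_
  · intro a ha
    simp only [mem_range]
    have : a ≤ j := mem_Iic.1 ha
    omega
  · intro a ha
    simp only [mem_Iic]
    have := mem_range.1 ha
    exact Fin.mk_le_mk.mpr (by omega) |>.trans_eq rfl
  · intro a _; rfl
  · intro a _; rfl
  · intro a ha
    exact (hH a.1 a.2).symm ▸ rfl

end aux

theorem parallel_po_rhr_schur_concave_and_increasing {n : ℕ} (u : ℝ)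
    (hu : u ∈ Set.Ioo (0:ℝ) 1) :
    (∀ lam : Fin n → ℝ, (∀ i, 0 < lam i) → ∀ i : Fin n, ∀ s t : ℝ,
      0 < s → s ≤ t →
        ∑ j, Function.update lam i s j / (1 - (1 - Function.update lam i s j) * u) ≤
          ∑ j, Function.update lam i t j / (1 - (1 - Function.update lam i t j) * u)) ∧
    (∀ lam mu : Fin n → ℝ, (∀ i, 0 < lam i) → (∀ i, 0 < mu i) →
      Majorizes lam mu →
        ∑ i, lam i / (1 - (1 - lam i) * u) ≤ ∑ i, mu i / (1 - (1 - mu i) * u)) ∧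
    (∀ lam mu : Fin n → ℝ, (∀ i, 0 < lam i) → (∀ i, 0 < mu i) →
      WSupermaj lam mu →
        ∑ i, lam i / (1 - (1 - lam i) * u) ≤ ∑ i, mu i / (1 - (1 - mu i) * u)) := by
  have hmain : ∀ lam mu : Fin n → ℝ, (∀ i, 0 < lam i) → (∀ i, 0 < mu i) →
      WSupermaj lam mu →
        ∑ i, lam i / (1 - (1 - lam i) * u) ≤ ∑ i, mu i / (1 - (1 - mu i) * u) := by
    intro lam mu hlam hmu hw
    rcases Nat.eq_zero_or_pos n with rfl | hn
    · simp
    set a : Fin n → ℝ := lam ∘ Tuple.sort lam with ha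
    set b : Fin n → ℝ := mu ∘ Tuple.sort mu with hb
    have ham : Monotone a := Tuple.monotone_sort lam
    have hbm : Monotone b := Tuple.monotone_sort mu
    set A : ℕ → ℝ := fun i => a ⟨min i (n - 1), by omega⟩ with hA
    set B : ℕ → ℝ := fun i => b ⟨min i (n - 1), by omega⟩ with hB
    have hApos : ∀ i, 0 < A i := fun i => hlam _
    have hBpos : ∀ i, 0 < B i := fun i => hmu _
    have hAm : Monotone A := fun i j hij => ham (Fin.mk_le_mk.2 (min_le_min hij le_rfl))
    have hBm : Monotone B := fun i j hij => hbm (Fin.mk_le_mk.2 (min_le_min hij le_rfl))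
    have hAeq : ∀ i (hi : i < n), A i = a ⟨i, hi⟩ := by
      intro i hi
      simp only [hA]
      congr 1
      exact Fin.mk.injEq _ _ _ _ ▸ (by omega)
    have hBeq : ∀ i (hi : i < n), B i = b ⟨i, hi⟩ := by
      intro i hi
      simp only [hB]
      congr 1
      exact Fin.mk.injEq _ _ _ _ ▸ (by omega)
    have hT : ∀ j, j < n → ∑ i ∈ range (j + 1), A i ≤ ∑ i ∈ range (j + 1), B i := by
      intro j hj
      have h1 := sum_Iic_fin a (⟨j, hj⟩ : Fin n) A hAeq
      have h2 := sum_Iic_fin b (⟨j, hj⟩ : Fin n) B hBeq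
      have := hw ⟨j, hj⟩
      rw [h1, h2] at this
      exact this
    have hkey := key_nat hu n A B hApos hBpos hAm hBm hT
    have hsl : ∑ i, lam i / (1 - (1 - lam i) * u) = ∑ i ∈ range n, fpo u (A i) := by
      rw [← Equiv.sum_comp (Tuple.sort lam) (fun i => lam i / (1 - (1 - lam i) * u))]
      rw [← Fin.sum_univ_eq_sum_range (fun i => fpo u (A i)) n]
      apply Finset.sum_congr rfl
      intro i _
      rw [hAeq i.1 i.2]
      simp [fpo, Dpo, ha, Fin.eta]
    have hsm : ∑ i, mu i / (1 - (1 - mu i) * u) = ∑ i ∈ range n, fpo u (B i) := by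
      rw [← Equiv.sum_comp (Tuple.sort mu) (fun i => mu i / (1 - (1 - mu i) * u))]
      rw [← Fin.sum_univ_eq_sum_range (fun i => fpo u (B i)) n]
      apply Finset.sum_congr rfl
      intro i _
      rw [hBeq i.1 i.2]
      simp [fpo, Dpo, hb, Fin.eta]
    rw [hsl, hsm]
    exact hkey
  refine ⟨?_, fun lam mu h1 h2 hmaj => hmain lam mu h1 h2 hmaj.1, hmain⟩
  intro lam hlam i s t hs hst
  apply Finset.sum_le_sum
  intro j _
  rcases eq_or_ne j i with rfl | hji
  · simp only [Function.update_self]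
    exact fpo_mono hu hs hst
  · rw [Function.update_of_ne hji, Function.update_of_ne hji]
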